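/- Let Q satisfy the margin condition with parameters β > 0 and C_β > 0, i.e. Q_X(0 < |η_Q(X) - 1/2| ≤ t) ≤ C_β·t^β for all t > 0. Suppose the estimator η̂ satisfies, for all η > 0, sup_x P(|η̂(x) - η_Q(x)| > η) ≤ exp(-a·η²) for some a > 0, where P is over randomness of the estimator independent of X. Then E[2·E_X(|η_Q(X) - 1/2|·1{f̂(X) ≠ f*(X)})] ≤ C·a^{-(1+β)/2} for a constant C depending only on C_β and β. -/

import Mathlib

set_option maxHeartbeats 1000000

open MeasureTheory

lemma exp_neg_le_rpow (k : ℝ) (hk : 0 < k) {x : ℝ} (hx : 0 < x) :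
    Real.exp (-x) ≤ (k / Real.exp 1) ^ k * x ^ (-k) := by
  have h1 : Real.exp 1 * (x / k) ≤ Real.exp (x / k) := by
    have := Real.add_one_le_exp (x / k - 1)
    calc Real.exp 1 * (x / k) = Real.exp 1 * ((x/k - 1) + 1) := by ring_nf
    _ ≤ Real.exp 1 * Real.exp (x/k - 1) :=
        mul_le_mul_of_nonneg_left this (Real.exp_pos 1).le
    _ = Real.exp (x / k) := by rw [← Real.exp_add]; ring_nf
  have hxk : 0 < x / k := div_pos hx hk
  have h2 : (Real.exp 1 * (x / k)) ^ k ≤ (Real.exp (x / k)) ^ k :=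
    Real.rpow_le_rpow (by positivity) h1 hk.le
  have h3 : (Real.exp (x / k)) ^ k = Real.exp x := by
    rw [← Real.exp_one_rpow (x/k), ← Real.rpow_mul (Real.exp_pos 1).le,
      div_mul_cancel₀ _ hk.ne', Real.exp_one_rpow]
  have h4 : x ^ k ≤ (k / Real.exp 1) ^ k * Real.exp x := by
    have : x ^ k = (k / Real.exp 1) ^ k * (Real.exp 1 * (x / k)) ^ k := by
      rw [← Real.mul_rpow (by positivity) (by positivity)]
      congr 1
      field_simp
    rw [this]
    exact mul_le_mul_of_nonneg_left (h3 ▸ h2) (by positivity)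
  have hxkpos : (0:ℝ) < x ^ k := Real.rpow_pos_of_pos hx k
  rw [Real.exp_neg, Real.rpow_neg hx.le, inv_eq_one_div, inv_eq_one_div, mul_one_div,
    div_le_div_iff₀ (Real.exp_pos x) hxkpos]
  nlinarith [Real.exp_pos x]

theorem plugin_excess_risk_bound
    (β Cβ : ℝ) (hβ : 0 < β) (hCβ : 0 < Cβ) :
    ∃ C > 0, ∀ (𝒳 Ω' : Type) (_ : MeasurableSpace 𝒳) (_ : MeasurableSpace Ω')
      (QX : Measure 𝒳) (_ : IsProbabilityMeasure QX)
      (μ : Measure Ω') (_ : IsProbabilityMeasure μ)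
      (ηQ : 𝒳 → ℝ) (_ : Measurable ηQ)
      (ηhat : Ω' → 𝒳 → ℝ) (_ : Measurable (Function.uncurry ηhat))
      (a : ℝ) (_ : 0 < a),
      -- margin condition
      (∀ t > 0, (QX {x | 0 < |ηQ x - 1/2| ∧ |ηQ x - 1/2| ≤ t}).toReal ≤ Cβ * t ^ β) →
      -- concentration of the estimator, uniformly in x
      (∀ η > 0, ∀ x, (μ {ω | |ηhat ω x - ηQ x| > η}).toReal ≤ Real.exp (-a * η ^ 2)) →
      ∫ ω, (2 * ∫ x, |ηQ x - 1/2| *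
            (if decide (1/2 < ηhat ω x) ≠ decide (1/2 < ηQ x) then 1 else 0) ∂QX) ∂μ
        ≤ C * a ^ (-(1 + β) / 2) := by
  -- constants
  set k : ℝ := (β + 2) / 2 with hk_def
  set p : ℝ := β + 1 with hp_def
  set q : ℝ := β / p with hq_def
  have hk : 0 < k := by rw [hk_def]; linarith
  have hp : 0 < p := by rw [hp_def]; linarith
  have hq0 : 0 < q := by rw [hq_def]; positivity
  have hq1 : q < 1 := by
    rw [hq_def, hp_def, div_lt_one (by linarith)]; linarith
  have h1q : 0 < 1 - q := by linarith
  set C1 : ℝ := (k / Real.exp 1) ^ k * (4:ℝ) ^ k with hC1_def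
  have hC1 : 0 < C1 := mul_pos (Real.rpow_pos_of_pos (div_pos hk (Real.exp_pos 1)) _)
    (Real.rpow_pos_of_pos (by norm_num) _)
  set E : ℝ := β / p + (1 - q) / (p + 1) with hE_def
  have hCpos : 0 < 2 * Cβ * C1 ^ E / (1 - q) :=
    div_pos (mul_pos (mul_pos two_pos hCβ) (Real.rpow_pos_of_pos hC1 _)) h1q
  refine ⟨2 * Cβ * C1 ^ E / (1 - q), hCpos, ?_⟩
  intro 𝒳 Ω' m𝒳 mΩ QX hQX μ hμ ηQ hηQ ηhat hηhat a ha hmargin hconc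
  haveI := hQX; haveI := hμ
  -- abbreviations depending on a
  set c : ℝ := C1 * a ^ (-k) with hc_def
  have hc : 0 < c := mul_pos hC1 (Real.rpow_pos_of_pos ha _)
  set s0 : ℝ := c ^ (1/(p+1)) with hs0_def
  have hs0 : 0 < s0 := Real.rpow_pos_of_pos hc _
  set K : ℝ := Cβ * c ^ (β/p) with hK_def
  have hKpos : 0 < K := mul_pos hCβ (Real.rpow_pos_of_pos hc _)
  set g : 𝒳 → ℝ := fun x => |ηQ x - 1/2| with hg_def
  have hgm : Measurable g := by rw [hg_def]; fun_prop
  have hgnn : ∀ x, 0 ≤ g x := fun x => abs_nonneg _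
  set F : 𝒳 → ℝ := fun x => min (g x) (c * g x ^ (-p)) with hF_def
  have hFnn : ∀ x, 0 ≤ F x := fun x =>
    le_min (hgnn x) (mul_nonneg hc.le (Real.rpow_nonneg (hgnn x) _))
  have hFm : Measurable F := by rw [hF_def]; fun_prop
  set H : Ω' × 𝒳 → ℝ := fun z =>
    |ηQ z.2 - 1/2| * (if decide (1/2 < ηhat z.1 z.2) ≠ decide (1/2 < ηQ z.2) then 1 else 0)
    with hH_def
  have hHnn : ∀ z, 0 ≤ H z := by
    intro z; rw [hH_def]
    apply mul_nonneg (abs_nonneg _); split <;> norm_num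
  -- measurability of the disagreement set
  have hSmeas : MeasurableSet
      {z : Ω' × 𝒳 | decide (1/2 < ηhat z.1 z.2) ≠ decide (1/2 < ηQ z.2)} := by
    have hA : MeasurableSet {z : Ω' × 𝒳 | 1/2 < ηhat z.1 z.2} :=
      measurableSet_lt measurable_const hηhat
    have hB : MeasurableSet {z : Ω' × 𝒳 | 1/2 < ηQ z.2} :=
      measurableSet_lt measurable_const (hηQ.comp measurable_snd)
    have hset : {z : Ω' × 𝒳 | decide (1/2 < ηhat z.1 z.2) ≠ decide (1/2 < ηQ z.2)}
        = ({z : Ω' × 𝒳 | 1/2 < ηhat z.1 z.2} \ {z : Ω' × 𝒳 | 1/2 < ηQ z.2})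
          ∪ ({z : Ω' × 𝒳 | 1/2 < ηQ z.2} \ {z : Ω' × 𝒳 | 1/2 < ηhat z.1 z.2}) := by
      ext z
      simp only [Set.mem_setOf_eq, Set.mem_union, Set.mem_diff, ne_eq, decide_eq_decide]
      tauto
    rw [hset]
    exact (hA.diff hB).union (hB.diff hA)
  have hHm : Measurable H := by
    rw [hH_def]
    exact (((hηQ.comp measurable_snd).sub measurable_const).abs).mul
      (Measurable.ite hSmeas measurable_const measurable_const)
  -- the disagreement sections are measurable
  have hDx : ∀ x : 𝒳, MeasurableSet
      {ω : Ω' | decide (1/2 < ηhat ω x) ≠ decide (1/2 < ηQ x)} :=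
    fun x => measurable_prodMk_right hSmeas
  -- inner lintegral over ω for fixed x
  have hων : ∀ x, ∫⁻ ω, ENNReal.ofReal (H (ω, x)) ∂μ
      = ENNReal.ofReal (g x)
        * μ {ω : Ω' | decide (1/2 < ηhat ω x) ≠ decide (1/2 < ηQ x)} := by
    intro x
    have heq : (fun ω => ENNReal.ofReal (H (ω, x)))
        = fun ω => ENNReal.ofReal (g x) *
            ({ω : Ω' | decide (1/2 < ηhat ω x) ≠ decide (1/2 < ηQ x)}.indicator 1 ω) := by
      funext ω
      rw [hH_def, hg_def]
      simp only [Set.indicator_apply, Set.mem_setOf_eq, Pi.one_apply]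
      rw [ENNReal.ofReal_mul (abs_nonneg _)]
      congr 1
      split <;> simp
    rw [heq, lintegral_const_mul' _ _ ENNReal.ofReal_ne_top, lintegral_indicator_one (hDx x)]
  -- pointwise bound via concentration
  have hptwise : ∀ x, ENNReal.ofReal (g x)
      * μ {ω : Ω' | decide (1/2 < ηhat ω x) ≠ decide (1/2 < ηQ x)}
      ≤ ENNReal.ofReal (F x) := by
    intro x
    rcases eq_or_lt_of_le (hgnn x) with h0 | hgx
    · rw [← h0, ENNReal.ofReal_zero, zero_mul]; exact zero_le
    · have hsub : {ω : Ω' | decide (1/2 < ηhat ω x) ≠ decide (1/2 < ηQ x)}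
          ⊆ {ω : Ω' | |ηhat ω x - ηQ x| > g x / 2} := by
        intro ω hω
        simp only [Set.mem_setOf_eq, ne_eq, decide_eq_decide] at hω ⊢
        have hge : g x ≤ |ηhat ω x - ηQ x| := by
          show |ηQ x - 1/2| ≤ |ηhat ω x - ηQ x|
          by_cases h1 : 1/2 < ηhat ω x
          · have h2 : ¬ (1/2 < ηQ x) := fun h2 => hω ⟨fun _ => h2, fun _ => h1⟩
            push_neg at h2
            have habs : |ηQ x - 1/2| = -(ηQ x - 1/2) := abs_of_nonpos (by linarith)
            rw [habs]
            exact le_abs.2 (Or.inl (by linarith))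
          · have h2 : 1/2 < ηQ x := by
              by_contra h2
              exact hω ⟨fun h => absurd h h1, fun h => absurd h h2⟩
            push_neg at h1
            have habs : |ηQ x - 1/2| = ηQ x - 1/2 := abs_of_nonneg (by linarith)
            rw [habs]
            exact le_abs.2 (Or.inr (by linarith))
        linarith
      have hμbound : μ {ω : Ω' | decide (1/2 < ηhat ω x) ≠ decide (1/2 < ηQ x)}
          ≤ ENNReal.ofReal (Real.exp (-a * (g x / 2) ^ 2)) := by
        refine le_trans (measure_mono hsub) ?_
        rw [ENNReal.le_ofReal_iff_toReal_le (measure_ne_top μ _) (Real.exp_pos _).le]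
        exact hconc (g x / 2) (by linarith) x
      have hreal : g x * Real.exp (-a * (g x / 2) ^ 2) ≤ F x := by
        rw [hF_def]
        refine le_min ?_ ?_
        · have hexple : Real.exp (-a * (g x / 2) ^ 2) ≤ 1 :=
            Real.exp_le_one_iff.2 (by nlinarith)
          nlinarith
        · have hX : 0 < a * (g x / 2) ^ 2 :=
            mul_pos ha (pow_pos (by linarith) 2)
          have hexp := exp_neg_le_rpow k hk hX
          have e1 : (a * (g x / 2) ^ 2) ^ (-k)
              = (4:ℝ) ^ k * a ^ (-k) * g x ^ (2 * (-k)) := by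
            have harg : a * (g x / 2) ^ 2 = a * g x ^ 2 / 4 := by ring
            rw [harg, Real.div_rpow (by positivity) (by norm_num),
              Real.mul_rpow ha.le (by positivity),
              Real.rpow_neg (by norm_num : (0:ℝ) ≤ 4), div_inv_eq_mul,
              ← Real.rpow_natCast (g x) 2, ← Real.rpow_mul hgx.le]
            push_cast
            ring
          have e2 : g x * g x ^ (2 * (-k)) = g x ^ (-p) := by
            nth_rewrite 1 [← Real.rpow_one (g x)]
            rw [← Real.rpow_add hgx]
            congr 1
            rw [hk_def, hp_def]; ring
          calc g x * Real.exp (-a * (g x / 2) ^ 2)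
              = g x * Real.exp (-(a * (g x / 2) ^ 2)) := by ring_nf
            _ ≤ g x * ((k / Real.exp 1) ^ k * (a * (g x / 2) ^ 2) ^ (-k)) :=
                mul_le_mul_of_nonneg_left hexp (hgnn x)
            _ = c * g x ^ (-p) := by
                rw [e1, hc_def, hC1_def, ← e2]; ring
      calc ENNReal.ofReal (g x)
            * μ {ω : Ω' | decide (1/2 < ηhat ω x) ≠ decide (1/2 < ηQ x)}
          ≤ ENNReal.ofReal (g x) * ENNReal.ofReal (Real.exp (-a * (g x / 2) ^ 2)) :=
            mul_le_mul_right hμbound _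
        _ = ENNReal.ofReal (g x * Real.exp (-a * (g x / 2) ^ 2)) :=
            (ENNReal.ofReal_mul (hgnn x)).symm
        _ ≤ ENNReal.ofReal (F x) := ENNReal.ofReal_le_ofReal hreal
  -- every value of F is at most s0
  have hFle : ∀ x, F x ≤ s0 := by
    intro x
    rcases le_or_gt (g x) s0 with h | h
    · exact le_trans (min_le_left _ _) h
    · refine le_trans (min_le_right _ _) ?_
      have h1 : g x ^ (-p) ≤ s0 ^ (-p) :=
        Real.rpow_le_rpow_of_nonpos hs0 h.le (by linarith)
      have h2 : c * s0 ^ (-p) = s0 := by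
        rw [hs0_def, ← Real.rpow_mul hc.le]
        nth_rewrite 1 [← Real.rpow_one c]
        rw [← Real.rpow_add hc]
        congr 1
        field_simp
        ring
      calc c * g x ^ (-p) ≤ c * s0 ^ (-p) := mul_le_mul_of_nonneg_left h1 hc.le
        _ = s0 := h2
  -- distribution function bound
  have hdist : ∀ t ∈ Set.Ioi (0:ℝ), QX {x | t < F x}
      ≤ (Set.Ioc 0 s0).indicator (fun t => ENNReal.ofReal (K * t ^ (-q))) t := by
    intro t ht
    simp only [Set.mem_Ioi] at ht
    rcases le_or_gt t s0 with hts | hts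
    · rw [Set.indicator_of_mem (Set.mem_Ioc.2 ⟨ht, hts⟩)]
      set T : ℝ := (c / t) ^ (1/p) with hT_def
      have hct : 0 < c / t := div_pos hc ht
      have hT : 0 < T := Real.rpow_pos_of_pos hct _
      have hsub : {x | t < F x} ⊆ {x | 0 < g x ∧ g x ≤ T} := by
        intro x hx
        simp only [Set.mem_setOf_eq] at hx ⊢
        have h1 : t < g x := lt_of_lt_of_le hx (min_le_left _ _)
        have hgx : 0 < g x := lt_trans ht h1
        have h2 : t < c * g x ^ (-p) := lt_of_lt_of_le hx (min_le_right _ _)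
        refine ⟨hgx, ?_⟩
        have hgp : 0 < g x ^ (p:ℝ) := Real.rpow_pos_of_pos hgx _
        have h3 : g x ^ (p:ℝ) < c / t := by
          rw [Real.rpow_neg hgx.le] at h2
          rw [lt_div_iff₀ ht]
          calc g x ^ (p:ℝ) * t = t * g x ^ (p:ℝ) := mul_comm _ _
            _ < (c * (g x ^ (p:ℝ))⁻¹) * g x ^ (p:ℝ) := mul_lt_mul_of_pos_right h2 hgp
            _ = c := by rw [mul_assoc, inv_mul_cancel₀ hgp.ne', mul_one]
        have h4 := Real.rpow_le_rpow hgp.le h3.le (le_of_lt (by exact one_div_pos.2 hp))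
        rw [← Real.rpow_mul hgx.le, mul_one_div, div_self hp.ne', Real.rpow_one] at h4
        exact h4
      refine le_trans (measure_mono hsub) ?_
      rw [ENNReal.le_ofReal_iff_toReal_le (measure_ne_top QX _)
        (mul_nonneg hKpos.le (Real.rpow_nonneg ht.le _))]
      refine le_trans (hmargin T hT) ?_
      have hTβ : T ^ β = c ^ (β/p) * t ^ (-q) := by
        rw [hT_def, ← Real.rpow_mul hct.le, Real.div_rpow hc.le ht.le,
          div_eq_mul_inv, ← Real.rpow_neg ht.le]
        rw [hq_def]
        congr 2 <;> ring
      rw [hK_def, hTβ]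
      ring_nf
      exact le_refl _
    · have hempty : {x | t < F x} = ∅ := by
        ext x
        simp only [Set.mem_setOf_eq, Set.mem_empty_iff_false, iff_false, not_lt]
        exact le_trans (hFle x) hts.le
      rw [hempty, measure_empty]
      exact zero_le
  -- explicit computation of the one-dimensional integral
  have hred : ∫⁻ t in Set.Ioc (0:ℝ) s0, ENNReal.ofReal (K * t ^ (-q))
      = ENNReal.ofReal (K * (s0 ^ (1-q) / (1-q))) := by
    have hii : IntervalIntegrable (fun t : ℝ => t ^ (-q)) volume 0 s0 :=
      intervalIntegral.intervalIntegrable_rpow' (by linarith)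
    have hio : IntegrableOn (fun t : ℝ => t ^ (-q)) (Set.Ioc 0 s0) volume :=
      (intervalIntegrable_iff_integrableOn_Ioc_of_le hs0.le).1 hii
    have hio2 : IntegrableOn (fun t : ℝ => K * t ^ (-q)) (Set.Ioc 0 s0) volume :=
      hio.const_mul K
    rw [← ofReal_integral_eq_lintegral_ofReal hio2 ?nn]
    case nn =>
      filter_upwards [ae_restrict_mem measurableSet_Ioc] with t ht
      have h1 : 0 < t := ht.1
      positivity
    congr 1
    rw [MeasureTheory.integral_const_mul, ← intervalIntegral.integral_of_le hs0.le,
      integral_rpow (Or.inl (by linarith)), Real.zero_rpow (by linarith : -q + 1 ≠ 0)]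
    rw [show (-q + 1 : ℝ) = 1 - q from by ring]
    ring
  -- final constant arithmetic
  have e1 : c ^ (β/p) = C1 ^ (β/p) * a ^ (-k*(β/p)) := by
    rw [hc_def, Real.mul_rpow hC1.le (by positivity), ← Real.rpow_mul ha.le]
  have e2 : (c ^ (1/(p+1))) ^ (1-q)
      = C1 ^ ((1-q)/(p+1)) * a ^ (-k*((1-q)/(p+1))) := by
    rw [← Real.rpow_mul hc.le, hc_def, Real.mul_rpow hC1.le (by positivity),
      ← Real.rpow_mul ha.le]
    congr 2 <;> ring
  have e3 : a ^ (-k*(β/p)) * a ^ (-k*((1-q)/(p+1))) = a ^ (-(1+β)/2) := by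
    rw [← Real.rpow_add ha]
    congr 1
    rw [hk_def, hq_def, hp_def]
    have hb1 : β + 1 ≠ 0 := by linarith
    have hb2 : β + 1 + 1 ≠ 0 := by linarith
    field_simp
    ring
  have e4 : C1 ^ E = C1 ^ (β/p) * C1 ^ ((1-q)/(p+1)) := by
    rw [hE_def, Real.rpow_add hC1]
  have hfinal : 2 * (K * (s0 ^ (1-q) / (1-q)))
      = (2 * Cβ * C1 ^ E / (1 - q)) * a ^ (-(1+β)/2) := by
    rw [hK_def, hs0_def, e2, e1, e4, ← e3]
    ring
  -- nonnegativity and measurability of the ω-integrand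
  have hGnn : 0 ≤ᵐ[μ] fun ω => 2 * ∫ x, H (ω, x) ∂QX :=
    Filter.Eventually.of_forall
      (fun ω => mul_nonneg (by norm_num) (integral_nonneg fun x => hHnn (ω, x)))
  have hGsm : AEStronglyMeasurable (fun ω => 2 * ∫ x, H (ω, x) ∂QX) μ :=
    (hHm.stronglyMeasurable.integral_prod_right'.const_mul 2).aestronglyMeasurable
  -- pointwise comparison of the Bochner integral with the lintegral
  have key : ∀ ω, ENNReal.ofReal (2 * ∫ x, H (ω, x) ∂QX)
      ≤ 2 * ∫⁻ x, ENNReal.ofReal (H (ω, x)) ∂QX := by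
    intro ω
    have hm : AEStronglyMeasurable (fun x => H (ω, x)) QX :=
      (hHm.comp measurable_prodMk_left).aestronglyMeasurable
    have hnn : 0 ≤ᵐ[QX] fun x => H (ω, x) :=
      Filter.Eventually.of_forall (fun x => hHnn (ω, x))
    rw [integral_eq_lintegral_of_nonneg_ae hnn hm,
      ENNReal.ofReal_mul (by norm_num : (0:ℝ) ≤ 2), ENNReal.ofReal_ofNat]
    exact mul_le_mul_right ENNReal.ofReal_toReal_le _
  -- put everything together
  show (∫ ω, (2 * ∫ x, H (ω, x) ∂QX) ∂μ)
      ≤ 2 * Cβ * C1 ^ E / (1 - q) * a ^ (-(1 + β) / 2)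
  rw [integral_eq_lintegral_of_nonneg_ae hGnn hGsm]
  have hRHS : (0:ℝ) ≤ 2 * Cβ * C1 ^ E / (1 - q) * a ^ (-(1 + β) / 2) :=
    le_of_lt (mul_pos hCpos (Real.rpow_pos_of_pos ha _))
  apply ENNReal.toReal_le_of_le_ofReal hRHS
  calc ∫⁻ ω, ENNReal.ofReal (2 * ∫ x, H (ω, x) ∂QX) ∂μ
      ≤ ∫⁻ ω, 2 * ∫⁻ x, ENNReal.ofReal (H (ω, x)) ∂QX ∂μ := lintegral_mono key
    _ = 2 * ∫⁻ ω, ∫⁻ x, ENNReal.ofReal (H (ω, x)) ∂QX ∂μ :=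
        lintegral_const_mul' 2 _ (by norm_num)
    _ = 2 * ∫⁻ x, ∫⁻ ω, ENNReal.ofReal (H (ω, x)) ∂μ ∂QX := by
        have hunc : AEMeasurable
            (Function.uncurry fun (ω : Ω') (x : 𝒳) => ENNReal.ofReal (H (ω, x)))
            (μ.prod QX) := (ENNReal.measurable_ofReal.comp hHm).aemeasurable
        rw [lintegral_lintegral_swap hunc]
    _ ≤ 2 * ∫⁻ x, ENNReal.ofReal (F x) ∂QX :=
        mul_le_mul_right (lintegral_mono fun x => le_trans (le_of_eq (hων x)) (hptwise x)) _
    _ = 2 * ∫⁻ t in Set.Ioi (0:ℝ), QX {x | t < F x} := by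
        rw [lintegral_eq_lintegral_meas_lt QX (Filter.Eventually.of_forall hFnn)
          hFm.aemeasurable]
    _ ≤ 2 * ∫⁻ t in Set.Ioi (0:ℝ),
          (Set.Ioc 0 s0).indicator (fun t => ENNReal.ofReal (K * t ^ (-q))) t := by
        refine mul_le_mul_right (lintegral_mono_ae ?_) _
        exact (ae_restrict_iff' measurableSet_Ioi).2
          (Filter.Eventually.of_forall fun t ht => hdist t ht)
    _ ≤ 2 * ∫⁻ t, (Set.Ioc 0 s0).indicator (fun t => ENNReal.ofReal (K * t ^ (-q))) t :=
        mul_le_mul_right (setLIntegral_le_lintegral _ _) _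
    _ = 2 * ∫⁻ t in Set.Ioc (0:ℝ) s0, ENNReal.ofReal (K * t ^ (-q)) := by
        rw [lintegral_indicator measurableSet_Ioc]
    _ = 2 * ENNReal.ofReal (K * (s0 ^ (1-q) / (1-q))) := by rw [hred]
    _ = ENNReal.ofReal (2 * (K * (s0 ^ (1-q) / (1-q)))) := by
        rw [ENNReal.ofReal_mul (by norm_num : (0:ℝ) ≤ 2), ENNReal.ofReal_ofNat]
    _ = ENNReal.ofReal (2 * Cβ * C1 ^ E / (1 - q) * a ^ (-(1 + β) / 2)) := by
        rw [hfinal]
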